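/- Cartier decomposition of the product of cubical integrands (Proposition 1.5): Let k = (k_1,…,k_p) and l = (l_1,…,l_q) be tuples of positive integers, n = k_1+…+k_p, m = l_1+…+l_q. Then for all (x_1,…,x_n) ∈ (0,1)^n and (x'_1,…,x'_m) ∈ (0,1)^m one has the identity f_k(x_1,…,x_n) · f_l(x'_1,…,x'_m) = Σ_{σ ∈ st(k,l)} f_σ(y_σ), where for each stuffle term σ the argument y_σ is the sequence of the n+m variables obtained by placing, for each part of σ, the corresponding block of x-variables (for a part k_i), the corresponding block of x'-variables (for a part l_j), or the block of x-variables for k_i followed by the block of x'-variables for l_j (for a merged part k_i + l_j). -/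

import Mathlib

/-- The cubical integrand
`f_k(x₁,…,x_n) = ∏_{i=1}^p (x₁⋯x_{K_{i−1}})/(1 − x₁⋯x_{K_i})`, where
`K_i = k₁ + … + k_i` (indices of the variables starting at `0`). -/
noncomputable def fk (k : List ℕ) (x : ℕ → ℝ) : ℝ :=
  ∏ i ∈ Finset.range k.length,
    (∏ j ∈ Finset.range ((k.take i).sum), x j) /
      (1 - ∏ j ∈ Finset.range ((k.take (i + 1)).sum), x j)

/-- Generic stuffle product of two lists, with a given merging operation, defined by
recursion on the *first* entries.  The stuffle of the paper, defined by recursion on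
the *last* entries, is obtained by reversing. -/
def stuffleMAux {α : Type*} (merge : α → α → α) : List α → List α → Multiset (List α)
  | [], l => {l}
  | k, [] => {k}
  | a :: as, b :: bs =>
      (stuffleMAux merge as (b :: bs)).map (a :: ·) +
      (stuffleMAux merge (a :: as) bs).map (b :: ·) +
      (stuffleMAux merge as bs).map (merge a b :: ·)
termination_by k l => k.length + l.length
decreasing_by all_goals simp +arith +decide

/-- The multiset of individual terms of the stuffle product of two *decorated*
tuples: each part carries its size together with the ordered block of (real)
variables attached to it; merging two parts adds the sizes and concatenates the
block of `x`-variables (coming from `k`) with the block of `x'`-variables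
(coming from `l`), in this order. -/
def stuffleDec {β : Type*} (d e : List (ℕ × List β)) : Multiset (List (ℕ × List β)) :=
  (stuffleMAux (fun p q => (p.1 + q.1, p.2 ++ q.2)) d.reverse e.reverse).map List.reverse

/-- The decoration of the tuple `k = (k₁,…,k_p)` by the variables `x`: the `i`-th part
`k_i` is paired with its block `(x_{K_{i−1}}, …, x_{K_i − 1})` of variables. -/
def blocks {β : Type*} : List ℕ → (ℕ → β) → List (ℕ × List β)
  | [], _ => []
  | a :: as, x => (a, (List.range a).map x) :: blocks as fun j => x (a + j)

/-- `f_σ(y_σ)` for a decorated stuffle term `σ`: the value of `f` on the underlying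
composition, evaluated at the concatenation of the variable blocks. -/
noncomputable def fdec (d : List (ℕ × List ℝ)) : ℝ :=
  fk (d.map Prod.fst) fun j => ((d.map Prod.snd).flatten).getD j 0

section CartierAux

/-- The merge operation on decorated parts. -/
def mrg (p q : ℕ × List ℝ) : ℕ × List ℝ := (p.1 + q.1, p.2 ++ q.2)

/-- A decorated part is good if its size is positive, its block has the right length,
and all its variables lie in `(0,1)`. -/
def Good (p : ℕ × List ℝ) : Prop :=
  0 < p.1 ∧ p.2.length = p.1 ∧ ∀ y ∈ p.2, y ∈ Set.Ioo (0:ℝ) 1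

lemma Good.mrg' {p q : ℕ × List ℝ} (hp : Good p) (hq : Good q) : Good (mrg p q) := by
  refine ⟨Nat.add_pos_left hp.1 _, ?_, ?_⟩
  · simp [mrg, hp.2.1, hq.2.1]
  · intro y hy
    rcases List.mem_append.mp hy with h | h
    · exact hp.2.2 y h
    · exact hq.2.2 y h

/-- The product of all variables of a decorated list. -/
noncomputable def Pv (d : List (ℕ × List ℝ)) : ℝ := (d.map fun p => p.2.prod).prod

lemma Pv_nil : Pv [] = 1 := rfl

lemma Pv_cons (a : ℕ × List ℝ) (d : List (ℕ × List ℝ)) :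
    Pv (a :: d) = a.2.prod * Pv d := by simp [Pv]

lemma Pv_reverse (d : List (ℕ × List ℝ)) : Pv d.reverse = Pv d := by
  simp [Pv, List.map_reverse, List.prod_reverse]

lemma prod_Ioc {v : List ℝ} (h : ∀ y ∈ v, y ∈ Set.Ioc (0:ℝ) 1) :
    v.prod ∈ Set.Ioc (0:ℝ) 1 := by
  induction v with
  | nil => simp
  | cons a t ih =>
    have ha := h a (by simp)
    have ht := ih (fun y hy => h y (by simp [hy]))
    simp only [List.prod_cons]
    exact ⟨mul_pos ha.1 ht.1, by nlinarith [ha.1, ha.2, ht.1, ht.2]⟩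

lemma prod_Ioo {v : List ℝ} (hv : v ≠ []) (h : ∀ y ∈ v, y ∈ Set.Ioo (0:ℝ) 1) :
    v.prod ∈ Set.Ioo (0:ℝ) 1 := by
  cases v with
  | nil => simp at hv
  | cons a t =>
    have ha := h a (by simp)
    have ht : t.prod ∈ Set.Ioc (0:ℝ) 1 :=
      prod_Ioc (fun y hy => ⟨(h y (by simp [hy])).1, le_of_lt (h y (by simp [hy])).2⟩)
    simp only [List.prod_cons]
    exact ⟨mul_pos ha.1 ht.1, by nlinarith [ha.1, ha.2, ht.1, ht.2]⟩

lemma Good.blockProd {p : ℕ × List ℝ} (hp : Good p) : p.2.prod ∈ Set.Ioo (0:ℝ) 1 := by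
  refine prod_Ioo ?_ hp.2.2
  intro h
  have h1 := hp.2.1
  rw [h] at h1
  simp only [List.length_nil] at h1
  have h0 := hp.1
  omega

lemma Pv_Ioc {d : List (ℕ × List ℝ)} (hd : ∀ p ∈ d, Good p) : Pv d ∈ Set.Ioc (0:ℝ) 1 := by
  refine prod_Ioc ?_
  intro y hy
  rcases List.mem_map.mp hy with ⟨p, hp, rfl⟩
  exact ⟨((hd p hp).blockProd).1, le_of_lt ((hd p hp).blockProd).2⟩

lemma prod_range_getD (w : List ℝ) :
    ∏ j ∈ Finset.range w.length, w.getD j 0 = w.prod := by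
  induction w with
  | nil => simp
  | cons a t ih =>
    rw [List.length_cons, Finset.prod_range_succ']
    simp only [List.getD_cons_succ, List.getD_cons_zero, List.prod_cons]
    rw [ih]; ring

lemma sum_take_le (k : List ℕ) (m : ℕ) : (k.take m).sum ≤ k.sum :=
  calc (k.take m).sum ≤ (k.take m).sum + (k.drop m).sum := Nat.le_add_right _ _
    _ = k.sum := by rw [← List.sum_append, List.take_append_drop]

lemma fk_congr {k : List ℕ} {x y : ℕ → ℝ} (h : ∀ j < k.sum, x j = y j) :
    fk k x = fk k y := by
  unfold fk
  refine Finset.prod_congr rfl fun i _ => ?_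
  rw [Finset.prod_congr rfl
      (fun j hj => h j (lt_of_lt_of_le (Finset.mem_range.mp hj) (sum_take_le k i))),
    Finset.prod_congr rfl
      (fun j hj => h j (lt_of_lt_of_le (Finset.mem_range.mp hj) (sum_take_le k (i+1))))]

lemma W_len {d : List (ℕ × List ℝ)} (h : ∀ p ∈ d, p.2.length = p.1) :
    ((d.map Prod.snd).flatten).length = (d.map Prod.fst).sum := by
  induction d with
  | nil => simp
  | cons a t ih =>
    simp only [List.map_cons, List.flatten_cons, List.length_append, List.sum_cons,
      h a (by simp), ih (fun p hp => h p (by simp [hp]))]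

lemma Pv_eq_flatten_prod (d : List (ℕ × List ℝ)) :
    ((d.map Prod.snd).flatten).prod = Pv d := by
  rw [List.prod_flatten, List.map_map]
  rfl

lemma fdec_nil : fdec [] = 1 := by simp [fdec, fk]

lemma fk_concat (k : List ℕ) (A : ℕ) (x : ℕ → ℝ) :
    fk (k ++ [A]) x
      = fk k x * ((∏ j ∈ Finset.range k.sum, x j) /
          (1 - ∏ j ∈ Finset.range (k.sum + A), x j)) := by
  unfold fk
  rw [List.length_append, List.length_singleton, Finset.prod_range_succ]
  congr 1
  · refine Finset.prod_congr rfl fun i hi => ?_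
    have hi' := Finset.mem_range.mp hi
    rw [List.take_append_of_le_length hi'.le, List.take_append_of_le_length hi']
  · rw [List.take_append_of_le_length le_rfl, List.take_length,
      List.take_of_length_le (by simp), List.sum_append, List.sum_singleton]

lemma fdec_concat {d : List (ℕ × List ℝ)} {a : ℕ × List ℝ}
    (hd : ∀ p ∈ d, Good p) (ha : Good a) :
    fdec (d ++ [a]) = fdec d * (Pv d / (1 - Pv d * a.2.prod)) := by
  have hlen : ((d.map Prod.snd).flatten).length = (d.map Prod.fst).sum :=
    W_len (fun p hp => (hd p hp).2.1)
  unfold fdec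
  simp only [List.map_append, List.map_cons, List.map_nil, List.flatten_append,
    List.flatten_cons, List.flatten_nil, List.append_nil]
  rw [fk_concat]
  have hgd : ∀ j < ((d.map Prod.snd).flatten).length,
      ((d.map Prod.snd).flatten ++ a.2).getD j 0 = ((d.map Prod.snd).flatten).getD j 0 :=
    fun j hj => List.getD_append _ _ _ _ hj
  have h1 : fk (d.map Prod.fst) (fun j => ((d.map Prod.snd).flatten ++ a.2).getD j 0)
      = fdec d := by
    unfold fdec
    exact fk_congr fun j hj => hgd j (by omega)
  have h2 : (∏ j ∈ Finset.range ((d.map Prod.fst).sum),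
        ((d.map Prod.snd).flatten ++ a.2).getD j 0) = Pv d := by
    rw [← hlen, Finset.prod_congr rfl (fun j hj => hgd j (Finset.mem_range.mp hj)),
      prod_range_getD, Pv_eq_flatten_prod]
  have h3 : (∏ j ∈ Finset.range ((d.map Prod.fst).sum + a.1),
        ((d.map Prod.snd).flatten ++ a.2).getD j 0) = Pv d * a.2.prod := by
    have hl2 : (d.map Prod.fst).sum + a.1 = ((d.map Prod.snd).flatten ++ a.2).length := by
      rw [List.length_append, hlen, ha.2.1]
    rw [hl2, prod_range_getD, List.prod_append, Pv_eq_flatten_prod]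
  rw [h1, h2, h3]
  rfl

lemma stuffle_good : ∀ d e : List (ℕ × List ℝ), (∀ p ∈ d, Good p) → (∀ p ∈ e, Good p) →
    ∀ σ ∈ stuffleMAux mrg d e, ∀ p ∈ σ, Good p := by
  intro d e
  induction d, e using stuffleMAux.induct with
  | case1 l =>
    intro _ he σ hσ
    rw [stuffleMAux.eq_1] at hσ
    simp only [Multiset.mem_singleton] at hσ
    subst hσ
    exact he
  | case2 k hk =>
    intro hd _ σ hσ
    rw [stuffleMAux.eq_2 mrg k hk] at hσ
    simp only [Multiset.mem_singleton] at hσ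
    subst hσ
    exact hd
  | case3 a as b bs ih1 ih2 ih3 =>
    intro hd he σ hσ
    rw [stuffleMAux] at hσ
    have hd' : ∀ p ∈ as, Good p := fun p hp => hd p (by simp [hp])
    have he' : ∀ p ∈ bs, Good p := fun p hp => he p (by simp [hp])
    have hA : Good a := hd a (by simp)
    have hB : Good b := he b (by simp)
    simp only [Multiset.mem_add, Multiset.mem_map] at hσ
    rcases hσ with (⟨τ, hτ, rfl⟩ | ⟨τ, hτ, rfl⟩) | ⟨τ, hτ, rfl⟩
    · intro p hp
      rcases List.mem_cons.mp hp with rfl | hp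
      · exact hA
      · exact ih1 hd' he τ hτ p hp
    · intro p hp
      rcases List.mem_cons.mp hp with rfl | hp
      · exact hB
      · exact ih2 hd he' τ hτ p hp
    · intro p hp
      rcases List.mem_cons.mp hp with rfl | hp
      · exact hA.mrg' hB
      · exact ih3 hd' he' τ hτ p hp

lemma stuffle_Pv : ∀ d e : List (ℕ × List ℝ),
    ∀ σ ∈ stuffleMAux mrg d e, Pv σ = Pv d * Pv e := by
  intro d e
  induction d, e using stuffleMAux.induct with
  | case1 l =>
    intro σ hσ
    rw [stuffleMAux.eq_1] at hσ
    simp only [Multiset.mem_singleton] at hσ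
    subst hσ
    simp [Pv_nil]
  | case2 k hk =>
    intro σ hσ
    rw [stuffleMAux.eq_2 mrg k hk] at hσ
    simp only [Multiset.mem_singleton] at hσ
    subst hσ
    simp [Pv_nil]
  | case3 a as b bs ih1 ih2 ih3 =>
    intro σ hσ
    rw [stuffleMAux] at hσ
    simp only [Multiset.mem_add, Multiset.mem_map] at hσ
    rcases hσ with (⟨τ, hτ, rfl⟩ | ⟨τ, hτ, rfl⟩) | ⟨τ, hτ, rfl⟩
    · simp only [Pv_cons, ih1 τ hτ]; ring
    · simp only [Pv_cons, ih2 τ hτ]; ring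
    · simp only [Pv_cons, ih3 τ hτ, mrg, List.prod_append]; ring

lemma main_sum : ∀ d e : List (ℕ × List ℝ), (∀ p ∈ d, Good p) → (∀ p ∈ e, Good p) →
    fdec d.reverse * fdec e.reverse
      = ((stuffleMAux mrg d e).map (fun σ => fdec σ.reverse)).sum := by
  intro d e
  induction d, e using stuffleMAux.induct with
  | case1 l =>
    intro _ _
    rw [stuffleMAux.eq_1]
    simp [fdec_nil]
  | case2 k hk =>
    intro _ _
    rw [stuffleMAux.eq_2 mrg k hk]
    simp [fdec_nil]
  | case3 a as b bs ih1 ih2 ih3 =>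
    intro hd he
    have hd' : ∀ p ∈ as, Good p := fun p hp => hd p (by simp [hp])
    have he' : ∀ p ∈ bs, Good p := fun p hp => he p (by simp [hp])
    have hA : Good a := hd a (by simp)
    have hB : Good b := he b (by simp)
    rw [stuffleMAux]
    rw [Multiset.map_add, Multiset.map_add, Multiset.sum_add, Multiset.sum_add,
      Multiset.map_map, Multiset.map_map, Multiset.map_map]
    set pa := a.2.prod with hpa
    set pb := b.2.prod with hpb
    set Pa := Pv as with hPa
    set Pb := Pv bs with hPb
    have hpaI : pa ∈ Set.Ioo (0:ℝ) 1 := hA.blockProd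
    have hpbI : pb ∈ Set.Ioo (0:ℝ) 1 := hB.blockProd
    have hPaI : Pa ∈ Set.Ioc (0:ℝ) 1 := Pv_Ioc hd'
    have hPbI : Pb ∈ Set.Ioc (0:ℝ) 1 := Pv_Ioc he'
    have hpt1 : ∀ τ ∈ stuffleMAux mrg as (b :: bs),
        ((fun σ => fdec σ.reverse) ∘ (a :: ·)) τ
          = fdec τ.reverse * (Pa * (pb * Pb) / (1 - Pa * (pb * Pb) * pa)) := by
      intro τ hτ
      have hgood : ∀ p ∈ τ.reverse, Good p := fun p hp =>
        stuffle_good as (b :: bs) hd' he τ hτ p (List.mem_reverse.mp hp)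
      show fdec (a :: τ).reverse = _
      rw [List.reverse_cons, fdec_concat hgood hA, Pv_reverse,
        stuffle_Pv as (b :: bs) τ hτ, Pv_cons, ← hPa, ← hPb, ← hpa, ← hpb]
    have hpt2 : ∀ τ ∈ stuffleMAux mrg (a :: as) bs,
        ((fun σ => fdec σ.reverse) ∘ (b :: ·)) τ
          = fdec τ.reverse * (pa * Pa * Pb / (1 - pa * Pa * Pb * pb)) := by
      intro τ hτ
      have hgood : ∀ p ∈ τ.reverse, Good p := fun p hp =>
        stuffle_good (a :: as) bs hd he' τ hτ p (List.mem_reverse.mp hp)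
      show fdec (b :: τ).reverse = _
      rw [List.reverse_cons, fdec_concat hgood hB, Pv_reverse,
        stuffle_Pv (a :: as) bs τ hτ, Pv_cons, ← hPa, ← hPb, ← hpa, ← hpb]
    have hpt3 : ∀ τ ∈ stuffleMAux mrg as bs,
        ((fun σ => fdec σ.reverse) ∘ (mrg a b :: ·)) τ
          = fdec τ.reverse * (Pa * Pb / (1 - Pa * Pb * (pa * pb))) := by
      intro τ hτ
      have hgood : ∀ p ∈ τ.reverse, Good p := fun p hp =>
        stuffle_good as bs hd' he' τ hτ p (List.mem_reverse.mp hp)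
      show fdec (mrg a b :: τ).reverse = _
      have hm : (mrg a b).2.prod = pa * pb := by simp [mrg, hpa, hpb]
      rw [List.reverse_cons, fdec_concat hgood (hA.mrg' hB), Pv_reverse,
        stuffle_Pv as bs τ hτ, hm, ← hPa, ← hPb]
    have hda : fdec (a :: as).reverse = fdec as.reverse * (Pa / (1 - Pa * pa)) := by
      rw [List.reverse_cons,
        fdec_concat (fun p hp => hd' p (List.mem_reverse.mp hp)) hA, Pv_reverse,
        ← hPa, ← hpa]
    have hdb : fdec (b :: bs).reverse = fdec bs.reverse * (Pb / (1 - Pb * pb)) := by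
      rw [List.reverse_cons,
        fdec_concat (fun p hp => he' p (List.mem_reverse.mp hp)) hB, Pv_reverse,
        ← hPb, ← hpb]
    rw [Multiset.map_congr rfl hpt1, Multiset.map_congr rfl hpt2,
      Multiset.map_congr rfl hpt3, Multiset.sum_map_mul_right,
      Multiset.sum_map_mul_right, Multiset.sum_map_mul_right,
      ← ih1 hd' he, ← ih2 hd he', ← ih3 hd' he', hda, hdb]
    have hab : Pa * pa ∈ Set.Ioo (0:ℝ) 1 :=
      ⟨mul_pos hPaI.1 hpaI.1, by nlinarith [hPaI.1, hPaI.2, hpaI.1, hpaI.2]⟩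
    have hcd : Pb * pb ∈ Set.Ioo (0:ℝ) 1 :=
      ⟨mul_pos hPbI.1 hpbI.1, by nlinarith [hPbI.1, hPbI.2, hpbI.1, hpbI.2]⟩
    have hfull : Pa * pa * (Pb * pb) ∈ Set.Ioo (0:ℝ) 1 :=
      ⟨mul_pos hab.1 hcd.1, by nlinarith [hab.1, hab.2, hcd.1, hcd.2]⟩
    have h1 : (1:ℝ) - Pa * pa ≠ 0 := sub_ne_zero_of_ne (ne_of_lt hab.2).symm
    have h2 : (1:ℝ) - Pb * pb ≠ 0 := sub_ne_zero_of_ne (ne_of_lt hcd.2).symm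
    have h3 : (1:ℝ) - Pa * (pb * Pb) * pa ≠ 0 := by
      intro h; nlinarith [hfull.2]
    have h4 : (1:ℝ) - pa * Pa * Pb * pb ≠ 0 := by
      intro h; nlinarith [hfull.2]
    have h5 : (1:ℝ) - Pa * Pb * (pa * pb) ≠ 0 := by
      intro h; nlinarith [hfull.2]
    have h6 : (1:ℝ) - Pa * Pb * pa * pb ≠ 0 := by
      intro h; nlinarith [hfull.2]
    field_simp
    have hi : (1 - Pa * Pb * pa * pb)⁻¹ * (1 - Pa * Pb * pa * pb) = 1 := inv_mul_cancel₀ h6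
    linear_combination (-(fdec as.reverse * Pa * fdec bs.reverse * Pb)) * hi

lemma blocks_good {k : List ℕ} {x : ℕ → ℝ} (hk : ∀ a ∈ k, 0 < a)
    (hx : ∀ j < k.sum, x j ∈ Set.Ioo (0:ℝ) 1) :
    ∀ p ∈ blocks k x, Good p := by
  induction k generalizing x with
  | nil => intro p hp; simp [blocks] at hp
  | cons a as ih =>
    intro p hp
    rw [blocks] at hp
    rcases List.mem_cons.mp hp with rfl | hp
    · refine ⟨hk a (by simp), by simp, ?_⟩
      intro y hy
      rcases List.mem_map.mp hy with ⟨j, hj, rfl⟩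
      exact hx j (lt_of_lt_of_le (List.mem_range.mp hj) (by simp))
    · refine ih (fun b hb => hk b (by simp [hb])) (fun j hj => ?_) p hp
      exact hx (a + j) (by simp only [List.sum_cons]; omega)

lemma blocks_fst {β : Type*} (k : List ℕ) (x : ℕ → β) :
    (blocks k x).map Prod.fst = k := by
  induction k generalizing x with
  | nil => rfl
  | cons a as ih => simp [blocks, ih]

lemma blocks_flatten (k : List ℕ) (x : ℕ → ℝ) :
    ((blocks k x).map Prod.snd).flatten = (List.range k.sum).map x := by
  induction k generalizing x with
  | nil => rfl
  | cons a as ih =>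
    simp only [blocks, List.map_cons, List.flatten_cons, ih, List.sum_cons,
      List.range_add, List.map_append, List.map_map]
    rfl

lemma fk_eq_fdec_blocks (k : List ℕ) (x : ℕ → ℝ) :
    fk k x = fdec (blocks k x) := by
  unfold fdec
  rw [blocks_fst, blocks_flatten]
  refine fk_congr fun j hj => ?_
  rw [List.getD_eq_getElem _ _ (by simpa using hj)]
  simp

end CartierAux


/-- **Cartier decomposition of the product of cubical integrands** (Proposition 1.5):
for tuples `k`, `l` of positive integers and variables `x ∈ (0,1)^n`, `x' ∈ (0,1)^m`
(`n = k₁+…+k_p`, `m = l₁+…+l_q`),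
`f_k(x) · f_l(x') = ∑_{σ ∈ st(k,l)} f_σ(y_σ)`, where `y_σ` interleaves the blocks of
`x`- and `x'`-variables according to the stuffle term `σ`, a merged part `k_i + l_j`
receiving the block of `k_i` followed by the block of `l_j`. -/
theorem cartier_decomposition (k l : List ℕ)
    (hk : ∀ a ∈ k, 0 < a) (hl : ∀ a ∈ l, 0 < a)
    (x x' : ℕ → ℝ)
    (hx : ∀ j < k.sum, x j ∈ Set.Ioo (0 : ℝ) 1)
    (hx' : ∀ j < l.sum, x' j ∈ Set.Ioo (0 : ℝ) 1) :
    fk k x * fk l x' = ((stuffleDec (blocks k x) (blocks l x')).map fdec).sum := by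
  have hmain := main_sum (blocks k x).reverse (blocks l x').reverse
    (fun p hp => blocks_good hk hx p (List.mem_reverse.mp hp))
    (fun p hp => blocks_good hl hx' p (List.mem_reverse.mp hp))
  rw [List.reverse_reverse, List.reverse_reverse] at hmain
  rw [fk_eq_fdec_blocks k x, fk_eq_fdec_blocks l x', hmain]
  show _ = (((stuffleMAux (fun p q => (p.1 + q.1, p.2 ++ q.2)) (blocks k x).reverse
      (blocks l x').reverse).map List.reverse).map fdec).sum
  rw [Multiset.map_map]
  rfl
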